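/- arXiv:1812.04928 — 2 statements merged into one kernel-verified Lean document; each statement's English description precedes it below -/
import Mathlib

section
/- Let (Ω, F, P) be a probability space, let p ≥ 1 and k ≥ 2 be integers, let q ∈ (0, 1], and let H0 ⊆ {1, …, p}. Let W_{j,i} : Ω → ℝ for j = 1, …, p and i = 1, …, k be random variables, and let T : Ω → ℝ be a measurable function. Define D_T(ω) = ∑_{j=1}^p 1{W_{j,1}(ω) ≥ T(ω)} and K_T(ω) = (1/(k−1)) ∑_{j=1}^p ∑_{i=2}^k 1{W_{j,i}(ω) ≥ T(ω)}. Assume: (a) for every ω ∈ Ω, K_T(ω) ≤ q · D_T(ω) (the defining property of the knockoff threshold T); and (b) for every u ∈ H0 and every i ∈ {2, …, k}, E[1{W_{u,1} ≥ T} / (D_T ∨ 1)] ≤ E[1{W_{u,i} ≥ T} / (D_T ∨ 1)]. Then the false discovery rate satisfies FDR = E[ (∑_{j ∈ H0} 1{W_{j,1} ≥ T}) / (D_T ∨ 1) ] ≤ q. -/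
open MeasureTheory


lemma knockoff_aux {Ω : Type*} [MeasurableSpace Ω] (P : Measure Ω) [IsProbabilityMeasure P]
    (p k : ℕ) (hk : 2 ≤ k) (q : ℝ) (hq0 : 0 ≤ q) (H0 : Finset (Fin p))
    (f : Fin p → Fin k → Ω → ℝ) (i0 : Fin k)
    (hfmeas : ∀ j i, Measurable (f j i))
    (hf0 : ∀ j i ω, 0 ≤ f j i ω) (hf1 : ∀ j i ω, f j i ω ≤ 1)
    (hub : ∀ ω, (1 / ((k : ℝ) - 1)) *
      ∑ j : Fin p, ∑ i ∈ Finset.univ.filter (fun i : Fin k => (i : ℕ) ≠ 0), f j i ω ≤ q)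
    (hb : ∀ u ∈ H0, ∀ i : Fin k, (i : ℕ) ≠ 0 →
      (∫ ω, f u i0 ω ∂P) ≤ ∫ ω, f u i ω ∂P) :
    (∫ ω, ∑ j ∈ H0, f j i0 ω ∂P) ≤ q := by
  haveI : NeZero k := ⟨by omega⟩
  set S : Finset (Fin k) := Finset.univ.filter (fun i : Fin k => (i : ℕ) ≠ 0) with hS
  have hScard : S.card = k - 1 := by
    have hSe : S = Finset.univ.erase (0 : Fin k) := by
      ext i
      simp only [hS, Finset.mem_filter, Finset.mem_erase, Finset.mem_univ, and_true, true_and, ne_eq, Fin.val_eq_zero_iff]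
    rw [hSe, Finset.card_erase_of_mem (Finset.mem_univ _), Finset.card_univ, Fintype.card_fin]
  have hkR : (0 : ℝ) < (k : ℝ) - 1 := by
    have : (2 : ℝ) ≤ (k : ℝ) := by exact_mod_cast hk
    linarith
  have hfint : ∀ j i, Integrable (f j i) P := by
    intro j i
    refine (integrable_const (1 : ℝ)).mono' (hfmeas j i).aestronglyMeasurable ?_
    filter_upwards with ω
    rw [Real.norm_eq_abs, abs_of_nonneg (hf0 j i ω)]
    exact hf1 j i ω
  have hcast : ((k - 1 : ℕ) : ℝ) = (k : ℝ) - 1 := by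
    have : 1 ≤ k := by omega
    push_cast [this]
    ring
  calc (∫ ω, ∑ j ∈ H0, f j i0 ω ∂P)
      = ∑ j ∈ H0, ∫ ω, f j i0 ω ∂P := integral_finset_sum _ (fun j _ => hfint j i0)
    _ ≤ ∑ j ∈ H0, (1 / ((k : ℝ) - 1)) * ∑ i ∈ S, ∫ ω, f j i ω ∂P := by
        refine Finset.sum_le_sum fun j hj => ?_
        have h1 : (∫ ω, f j i0 ω ∂P)
            = (1 / ((k : ℝ) - 1)) * ∑ _i ∈ S, ∫ ω, f j i0 ω ∂P := by
          rw [Finset.sum_const, hScard, nsmul_eq_mul, hcast]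
          field_simp
        rw [h1]
        refine mul_le_mul_of_nonneg_left ?_ (by positivity)
        refine Finset.sum_le_sum fun i hi => ?_
        exact hb j hj i ((Finset.mem_filter.mp hi).2)
    _ ≤ ∑ j : Fin p, (1 / ((k : ℝ) - 1)) * ∑ i ∈ S, ∫ ω, f j i ω ∂P := by
        refine Finset.sum_le_sum_of_subset_of_nonneg (Finset.subset_univ _) fun j _ _ => ?_
        refine mul_nonneg (by positivity) ?_
        exact Finset.sum_nonneg fun i _ => integral_nonneg (fun ω => hf0 j i ω)
    _ = ∫ ω, (1 / ((k : ℝ) - 1)) * ∑ j : Fin p, ∑ i ∈ S, f j i ω ∂P := by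
        rw [← Finset.mul_sum]
        rw [MeasureTheory.integral_const_mul]
        congr 1
        rw [integral_finset_sum _ (fun j _ => integrable_finset_sum _ (fun i _ => hfint j i))]
        exact Finset.sum_congr rfl fun j _ =>
          (integral_finset_sum _ (fun i _ => hfint j i)).symm
    _ ≤ ∫ _ω, q ∂P := by
        refine integral_mono ?_ (integrable_const q) hub
        exact (integrable_finset_sum _ (fun j _ => integrable_finset_sum _
          (fun i _ => hfint j i))).const_mul _
    _ = q := by simp

/-- Theorem 1 of "Multiple model-free knockoffs" (Holden & Hellton).
`W j i` for `j = 1,…,p` and `i = 1,…,k` (here `i = 0 : Fin k` plays the role of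
the original statistic `i = 1`, and the indices with `(i : ℕ) ≠ 0` play the role
of the knockoff copies `i = 2,…,k`).  With
`D_T(ω) = ∑_j 1{W_{j,1}(ω) ≥ T(ω)}` and
`K_T(ω) = (1/(k-1)) ∑_j ∑_{i≥2} 1{W_{j,i}(ω) ≥ T(ω)}`,
assume (a) `K_T ≤ q·D_T` pointwise (the defining property of the knockoff
threshold `T`) and (b) assumption (6):
`E[1{W_{u,1} ≥ T}/(D_T ∨ 1)] ≤ E[1{W_{u,i} ≥ T}/(D_T ∨ 1)]` for all null `u`
and all `i ≥ 2`.  Then the false discovery rate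
`FDR = E[(∑_{j ∈ H0} 1{W_{j,1} ≥ T})/(D_T ∨ 1)]` is at most `q`. -/
theorem multiple_knockoffs_FDR_control
    {Ω : Type*} [MeasurableSpace Ω] (P : Measure Ω) [IsProbabilityMeasure P]
    (p k : ℕ) (hp : 1 ≤ p) (hk : 2 ≤ k)
    (q : ℝ) (hq0 : 0 < q) (hq1 : q ≤ 1)
    (H0 : Finset (Fin p))
    (W : Fin p → Fin k → Ω → ℝ) (hWmeas : ∀ j i, Measurable (W j i))
    (T : Ω → ℝ) (hTmeas : Measurable T)
    (D : Ω → ℝ)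
    (hD : ∀ ω, D ω = ∑ j : Fin p, if W j ⟨0, by omega⟩ ω ≥ T ω then (1 : ℝ) else 0)
    (K : Ω → ℝ)
    (hK : ∀ ω, K ω = (1 / ((k : ℝ) - 1)) *
      ∑ j : Fin p, ∑ i ∈ Finset.univ.filter (fun i : Fin k => (i : ℕ) ≠ 0),
        (if W j i ω ≥ T ω then (1 : ℝ) else 0))
    (ha : ∀ ω, K ω ≤ q * D ω)
    (hb : ∀ u ∈ H0, ∀ i : Fin k, (i : ℕ) ≠ 0 →
      (∫ ω, (if W u ⟨0, by omega⟩ ω ≥ T ω then (1 : ℝ) else 0) / max (D ω) 1 ∂P) ≤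
        ∫ ω, (if W u i ω ≥ T ω then (1 : ℝ) else 0) / max (D ω) 1 ∂P) :
    (∫ ω, (∑ j ∈ H0, if W j ⟨0, by omega⟩ ω ≥ T ω then (1 : ℝ) else 0) /
        max (D ω) 1 ∂P) ≤ q := by
  have hm1 : ∀ ω, (1 : ℝ) ≤ max (D ω) 1 := fun ω => le_max_right _ _
  have hm0 : ∀ ω, (0 : ℝ) < max (D ω) 1 := fun ω => lt_of_lt_of_le one_pos (hm1 ω)
  have hDmeas : Measurable D := by
    have hDe : D = fun ω => ∑ j : Fin p,
        if W j ⟨0, by omega⟩ ω ≥ T ω then (1 : ℝ) else 0 := funext hD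
    rw [hDe]
    exact Finset.measurable_sum _ fun j _ =>
      Measurable.ite (measurableSet_le hTmeas (hWmeas j _)) measurable_const measurable_const
  have key := knockoff_aux P p k hk q hq0.le H0
    (fun j i ω => (if W j i ω ≥ T ω then (1 : ℝ) else 0) / max (D ω) 1)
    ⟨0, by omega⟩
    (fun j i => Measurable.div
      (Measurable.ite (measurableSet_le hTmeas (hWmeas j i)) measurable_const measurable_const)
      (hDmeas.max measurable_const))
    (fun j i ω => div_nonneg (by positivity) (hm0 ω).le)
    (fun j i ω => by
      rw [div_le_one (hm0 ω)]
      exact le_trans (by split <;> norm_num) (hm1 ω))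
    (fun ω => by
      have hKq : K ω / max (D ω) 1 ≤ q := by
        rw [div_le_iff₀ (hm0 ω)]
        calc K ω ≤ q * D ω := ha ω
          _ ≤ q * max (D ω) 1 := by
              exact mul_le_mul_of_nonneg_left (le_max_left _ _) hq0.le
      calc (1 / ((k : ℝ) - 1)) * ∑ j : Fin p,
            ∑ i ∈ Finset.univ.filter (fun i : Fin k => (i : ℕ) ≠ 0),
              (if W j i ω ≥ T ω then (1 : ℝ) else 0) / max (D ω) 1
          = K ω / max (D ω) 1 := by
            rw [hK ω, mul_div_assoc]
            congr 1
            rw [Finset.sum_div]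
            exact Finset.sum_congr rfl fun j _ => (Finset.sum_div _ _ _).symm
        _ ≤ q := hKq)
    hb
  calc (∫ ω, (∑ j ∈ H0, if W j ⟨0, by omega⟩ ω ≥ T ω then (1 : ℝ) else 0) /
        max (D ω) 1 ∂P)
      = ∫ ω, ∑ j ∈ H0, (if W j ⟨0, by omega⟩ ω ≥ T ω then (1 : ℝ) else 0) /
          max (D ω) 1 ∂P := by
        congr 1; funext ω; rw [Finset.sum_div]
    _ ≤ q := key
end

section
/- Let p ≥ 1, let Σ be a symmetric positive definite p × p real matrix, let s ∈ ℝ^p, and set D = diag(s). Assume V := 2D − D Σ⁻¹ D is positive definite. Let G be the 2p × 2p block matrix G = [[Σ, Σ − D], [Σ − D, Σ]]. Then G is positive definite, and if X is a random vector distributed N(0, Σ) on ℝ^p and, conditionally on X = x, the vector X̃ is distributed N((I − D Σ⁻¹) x, V) on ℝ^p, then the joint vector (X, X̃) is distributed N(0, G) on ℝ^{2p}. Equivalently, the probability measure on ℝ^p × ℝ^p obtained by first sampling x from the multivariate Gaussian N(0, Σ) and then sampling x̃ from the multivariate Gaussian N((I − D Σ⁻¹) x, V) equals the multivariate Gaussian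 measure N(0, G) on ℝ^{2p}. -/
open MeasureTheory Matrix

/-- The density of the multivariate Gaussian distribution `N(m, C)` on `ι → ℝ`
(for an invertible covariance matrix `C`). -/
noncomputable def gaussianPdf {ι : Type*} [Fintype ι] [DecidableEq ι] (m : ι → ℝ)
    (C : Matrix ι ι ℝ) (x : ι → ℝ) : ℝ :=
  (Real.sqrt ((2 * Real.pi) ^ (Fintype.card ι) * C.det))⁻¹ *
    Real.exp (-(1 / 2) * ((x - m) ⬝ᵥ (C⁻¹ *ᵥ (x - m))))

/-- The multivariate Gaussian measure `N(m, C)` on `ι → ℝ`, defined by its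
density with respect to Lebesgue measure. -/
noncomputable def gaussianMeasure {ι : Type*} [Fintype ι] [DecidableEq ι] (m : ι → ℝ)
    (C : Matrix ι ι ℝ) : Measure (ι → ℝ) :=
  volume.withDensity (fun x => ENNReal.ofReal (gaussianPdf m C x))

lemma gaussianPdf_nonneg {ι : Type*} [Fintype ι] [DecidableEq ι] (m : ι → ℝ)
    (C : Matrix ι ι ℝ) (x : ι → ℝ) : 0 ≤ gaussianPdf m C x :=
  mul_nonneg (inv_nonneg.2 (Real.sqrt_nonneg _)) (Real.exp_pos _).le

lemma measurable_gaussianPdf {ι : Type*} [Fintype ι] [DecidableEq ι] (m : ι → ℝ)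
    (C : Matrix ι ι ℝ) : Measurable (gaussianPdf m C) := by
  unfold gaussianPdf
  simp only [dotProduct, mulVec]
  measurability

lemma gaussianPdf_shift {ι : Type*} [Fintype ι] [DecidableEq ι] (m : ι → ℝ)
    (C : Matrix ι ι ℝ) (x : ι → ℝ) :
    gaussianPdf m C x = gaussianPdf 0 C (x - m) := by
  simp [gaussianPdf]

lemma measurable_gaussianPdf2 {ι : Type*} [Fintype ι] [DecidableEq ι]
    (A : Matrix ι ι ℝ) (C : Matrix ι ι ℝ) :
    Measurable (fun q : (ι → ℝ) × (ι → ℝ) => gaussianPdf (A *ᵥ q.1) C q.2) := by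
  have h : (fun q : (ι → ℝ) × (ι → ℝ) => gaussianPdf (A *ᵥ q.1) C q.2)
      = fun q => gaussianPdf 0 C (q.2 - A *ᵥ q.1) := funext fun q => gaussianPdf_shift _ _ _
  rw [h]
  refine (measurable_gaussianPdf 0 C).comp ?_
  refine measurable_pi_lambda _ (fun i => ?_)
  simp only [Pi.sub_apply, mulVec, dotProduct]
  exact ((measurable_pi_apply i).comp measurable_snd).sub
    (Finset.measurable_sum _ (fun j _ =>
      (((measurable_pi_apply j).comp measurable_fst)).const_mul _))

lemma posDef_fromBlocks_diag {m n : Type*} [Fintype m] [Fintype n] [DecidableEq m] [DecidableEq n]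
    {S : Matrix m m ℝ} {V : Matrix n n ℝ} (hS : S.PosDef) (hV : V.PosDef) :
    (fromBlocks S 0 0 V).PosDef := by
  rw [posDef_iff_dotProduct_mulVec]
  constructor
  · have h1 : Sᵀ = S := by rw [← conjTranspose_eq_transpose_of_trivial]; exact hS.1.eq
    have h2 : Vᵀ = V := by rw [← conjTranspose_eq_transpose_of_trivial]; exact hV.1.eq
    rw [IsHermitian, fromBlocks_conjTranspose]
    simp [h1, h2]
  · intro x hx
    have hxe : x = Sum.elim (x ∘ Sum.inl) (x ∘ Sum.inr) := (Sum.elim_comp_inl_inr x).symm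
    rw [hxe, fromBlocks_mulVec]
    simp only [zero_mulVec, add_zero, zero_add, star_trivial]
    rw [sumElim_dotProduct_sumElim]
    have hne : x ∘ Sum.inl ≠ 0 ∨ x ∘ Sum.inr ≠ 0 := by
      by_contra h
      push_neg at h
      apply hx
      rw [hxe, h.1, h.2]
      ext i; cases i <;> rfl
    rcases hne with h | h
    · exact add_pos_of_pos_of_nonneg (by simpa using hS.dotProduct_mulVec_pos h) (by simpa using hV.posSemidef.dotProduct_mulVec_nonneg _)
    · exact add_pos_of_nonneg_of_pos (by simpa using hS.posSemidef.dotProduct_mulVec_nonneg _) (by simpa using hV.dotProduct_mulVec_pos h)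

lemma posDef_mul_mul_transpose {n : Type*} [Fintype n] [DecidableEq n]
    {B M : Matrix n n ℝ} (hB : B.PosDef) (hM : IsUnit M) : (M * B * Mᵀ).PosDef := by
  rw [posDef_iff_dotProduct_mulVec]
  constructor
  · have h1 : Bᵀ = B := by rw [← conjTranspose_eq_transpose_of_trivial]; exact hB.1
    rw [IsHermitian, conjTranspose_eq_transpose_of_trivial, transpose_mul, transpose_mul,
      transpose_transpose, h1, Matrix.mul_assoc]
  · intro x hx
    have h1 : (M * B * Mᵀ) *ᵥ x = M *ᵥ (B *ᵥ (Mᵀ *ᵥ x)) := by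
      rw [mulVec_mulVec, mulVec_mulVec]
    rw [star_trivial, h1, dotProduct_mulVec, ← mulVec_transpose]
    have hMT : IsUnit Mᵀ := by
      rwa [isUnit_iff_isUnit_det, det_transpose, ← isUnit_iff_isUnit_det]
    have hne : Mᵀ *ᵥ x ≠ 0 := by
      intro h
      exact hx ((mulVec_injective_iff_isUnit.mpr hMT).eq_iff.mp (by simpa using h))
    simpa using hB.dotProduct_mulVec_pos hne

/-- The Gaussian model-free knockoff construction: with `Σ` positive definite,
`D = diag s`, and `V = 2D - DΣ⁻¹D` positive definite, the block matrix
`G = [[Σ, Σ - D], [Σ - D, Σ]]` is positive definite, and sampling `x ~ N(0, Σ)`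
and then `x̃ ~ N((I - DΣ⁻¹)x, V)` produces the joint distribution `N(0, G)`
(on `(Fin p ⊕ Fin p) → ℝ`, where the left summand carries `x` and the right
summand carries `x̃`). -/
theorem gaussian_knockoff_construction
    (p : ℕ) (hp : 1 ≤ p)
    (S : Matrix (Fin p) (Fin p) ℝ) (hS : S.PosDef)
    (s : Fin p → ℝ)
    (D : Matrix (Fin p) (Fin p) ℝ) (hD : D = Matrix.diagonal s)
    (V : Matrix (Fin p) (Fin p) ℝ) (hV : V = 2 • D - D * S⁻¹ * D)
    (hVpd : V.PosDef)
    (G : Matrix (Fin p ⊕ Fin p) (Fin p ⊕ Fin p) ℝ)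
    (hG : G = Matrix.fromBlocks S (S - D) (S - D) S) :
    G.PosDef ∧
      (gaussianMeasure (0 : Fin p → ℝ) S).bind
        (fun x => Measure.map (fun xt => Sum.elim x xt)
          (gaussianMeasure ((1 - D * S⁻¹) *ᵥ x) V)) =
      gaussianMeasure (0 : (Fin p ⊕ Fin p) → ℝ) G := by
  set A : Matrix (Fin p) (Fin p) ℝ := 1 - D * S⁻¹ with hA
  have hSd : IsUnit S.det := isUnit_iff_ne_zero.mpr hS.det_pos.ne'
  have hVd : IsUnit V.det := isUnit_iff_ne_zero.mpr hVpd.det_pos.ne'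
  have hS1 : S * S⁻¹ = 1 := mul_nonsing_inv _ hSd
  have hS2 : S⁻¹ * S = 1 := nonsing_inv_mul _ hSd
  have hV1 : V * V⁻¹ = 1 := mul_nonsing_inv _ hVd
  have hSsymm : Sᵀ = S := by rw [← conjTranspose_eq_transpose_of_trivial]; exact hS.1.eq
  have hDsymm : Dᵀ = D := by rw [hD, diagonal_transpose]
  have hAT : Aᵀ = 1 - S⁻¹ * D := by
    rw [hA, transpose_sub, transpose_one, transpose_mul, hDsymm, transpose_nonsing_inv, hSsymm]
  have hAS : A * S = S - D := by
    rw [hA, Matrix.sub_mul, Matrix.one_mul, Matrix.mul_assoc, hS2, Matrix.mul_one]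
  have hSAT : S * Aᵀ = S - D := by
    rw [hAT, Matrix.mul_sub, Matrix.mul_one, ← Matrix.mul_assoc, hS1, Matrix.one_mul]
  have hSDAT : (S - D) * Aᵀ = S - V := by
    rw [Matrix.sub_mul, hSAT, hAT, Matrix.mul_sub, Matrix.mul_one, ← Matrix.mul_assoc, hV,
      two_smul]
    abel
  have hGfact : G = fromBlocks 1 0 A 1 * fromBlocks S 0 0 V * fromBlocks 1 Aᵀ 0 1 := by
    have e1 : (fromBlocks 1 0 A 1 : Matrix (Fin p ⊕ Fin p) (Fin p ⊕ Fin p) ℝ) *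
        fromBlocks S 0 0 V = fromBlocks S 0 (A * S) V := by
      rw [fromBlocks_multiply]; simp
    have e2 : (fromBlocks S 0 (A * S) V : Matrix (Fin p ⊕ Fin p) (Fin p ⊕ Fin p) ℝ) *
        fromBlocks 1 Aᵀ 0 1 = fromBlocks S (S * Aᵀ) (A * S) (A * S * Aᵀ + V) := by
      rw [fromBlocks_multiply]; simp
    rw [e1, e2, hAS, hSAT, hSDAT, sub_add_cancel, hG]
  have hdetG : G.det = S.det * V.det := by
    rw [hGfact, det_mul, det_mul]
    simp [det_fromBlocks_zero₁₂, det_fromBlocks_zero₂₁]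
  have hGpd : G.PosDef := by
    have hMu : IsUnit (fromBlocks 1 0 A 1 : Matrix (Fin p ⊕ Fin p) (Fin p ⊕ Fin p) ℝ) := by
      rw [isUnit_iff_isUnit_det, det_fromBlocks_zero₁₂]; simp
    have hT : (fromBlocks 1 0 A 1 : Matrix (Fin p ⊕ Fin p) (Fin p ⊕ Fin p) ℝ)ᵀ =
        fromBlocks 1 Aᵀ 0 1 := by
      rw [fromBlocks_transpose]; simp
    rw [hGfact, ← hT]
    exact posDef_mul_mul_transpose (posDef_fromBlocks_diag hS hVpd) hMu
  have hLinv : (fromBlocks 1 Aᵀ 0 1 : Matrix (Fin p ⊕ Fin p) (Fin p ⊕ Fin p) ℝ)⁻¹ =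
      fromBlocks 1 (-Aᵀ) 0 1 := by
    apply inv_eq_right_inv
    rw [fromBlocks_multiply, ← fromBlocks_one]
    congr 1 <;> simp
  have hMinv : (fromBlocks 1 0 A 1 : Matrix (Fin p ⊕ Fin p) (Fin p ⊕ Fin p) ℝ)⁻¹ =
      fromBlocks 1 0 (-A) 1 := by
    apply inv_eq_right_inv
    rw [fromBlocks_multiply, ← fromBlocks_one]
    congr 1 <;> simp
  have hBinv : (fromBlocks S 0 0 V : Matrix (Fin p ⊕ Fin p) (Fin p ⊕ Fin p) ℝ)⁻¹ =
      fromBlocks S⁻¹ 0 0 V⁻¹ := by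
    apply inv_eq_right_inv
    rw [fromBlocks_multiply, ← fromBlocks_one]
    congr 1 <;> simp [hS1, hV1]
  have hGinv : G⁻¹ = fromBlocks 1 (-Aᵀ) 0 1 *
      (fromBlocks S⁻¹ 0 0 V⁻¹ * fromBlocks 1 0 (-A) 1) := by
    rw [hGfact, Matrix.mul_inv_rev, Matrix.mul_inv_rev, hLinv, hMinv, hBinv]
  have hquad : ∀ x xt : Fin p → ℝ,
      (Sum.elim x xt) ⬝ᵥ (G⁻¹ *ᵥ Sum.elim x xt) =
        x ⬝ᵥ (S⁻¹ *ᵥ x) + (xt - A *ᵥ x) ⬝ᵥ (V⁻¹ *ᵥ (xt - A *ᵥ x)) := by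
    intro x xt
    have r1 : (fromBlocks 1 0 (-A) 1 : Matrix (Fin p ⊕ Fin p) (Fin p ⊕ Fin p) ℝ) *ᵥ
        Sum.elim x xt = Sum.elim x (xt - A *ᵥ x) := by
      rw [fromBlocks_mulVec]
      simp [neg_mulVec, neg_add_eq_sub]
    have r2 : (fromBlocks S⁻¹ 0 0 V⁻¹ : Matrix (Fin p ⊕ Fin p) (Fin p ⊕ Fin p) ℝ) *ᵥ
        Sum.elim x (xt - A *ᵥ x) =
        Sum.elim (S⁻¹ *ᵥ x) (V⁻¹ *ᵥ (xt - A *ᵥ x)) := by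
      rw [fromBlocks_mulVec]; simp
    have r3 : (fromBlocks 1 (-Aᵀ) 0 1 : Matrix (Fin p ⊕ Fin p) (Fin p ⊕ Fin p) ℝ) *ᵥ
        Sum.elim (S⁻¹ *ᵥ x) (V⁻¹ *ᵥ (xt - A *ᵥ x)) =
        Sum.elim (S⁻¹ *ᵥ x - Aᵀ *ᵥ (V⁻¹ *ᵥ (xt - A *ᵥ x))) (V⁻¹ *ᵥ (xt - A *ᵥ x)) := by
      rw [fromBlocks_mulVec]
      simp [neg_mulVec, sub_eq_add_neg]
    rw [hGinv, ← mulVec_mulVec, ← mulVec_mulVec, r1, r2, r3, sumElim_dotProduct_sumElim,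
      dotProduct_sub, dotProduct_mulVec x Aᵀ, vecMul_transpose, sub_dotProduct]
    ring
  have hfact_pdf : ∀ (x xt : Fin p → ℝ),
      gaussianPdf (0 : (Fin p ⊕ Fin p) → ℝ) G (Sum.elim x xt) =
        gaussianPdf 0 S x * gaussianPdf (A *ᵥ x) V xt := by
    intro x xt
    unfold gaussianPdf
    simp only [sub_zero]
    rw [hquad, hdetG]
    have hcard : (Fintype.card (Fin p ⊕ Fin p)) = p + p := by simp
    rw [hcard, Fintype.card_fin, pow_add]
    have h2p : (0:ℝ) ≤ (2 * Real.pi) ^ p := by positivity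
    rw [show (2 * Real.pi) ^ p * (2 * Real.pi) ^ p * (S.det * V.det)
        = ((2 * Real.pi) ^ p * S.det) * ((2 * Real.pi) ^ p * V.det) by ring]
    rw [Real.sqrt_mul (mul_nonneg h2p hS.det_pos.le), mul_inv]
    rw [show -(1/2 : ℝ) * (x ⬝ᵥ S⁻¹ *ᵥ x + (xt - A *ᵥ x) ⬝ᵥ V⁻¹ *ᵥ (xt - A *ᵥ x))
        = (-(1/2) * (x ⬝ᵥ S⁻¹ *ᵥ x)) + (-(1/2) * ((xt - A *ᵥ x) ⬝ᵥ V⁻¹ *ᵥ (xt - A *ᵥ x)))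
        by ring, Real.exp_add]
    ring
  refine ⟨hGpd, ?_⟩
  -- measurability preliminaries
  have mElim : ∀ x : Fin p → ℝ, Measurable (fun xt : Fin p → ℝ => Sum.elim x xt) := by
    intro x
    refine measurable_pi_lambda _ (fun i => ?_)
    cases i with
    | inl j => exact measurable_const
    | inr j => exact measurable_pi_apply j
  have mElim2 : Measurable (fun q : (Fin p → ℝ) × (Fin p → ℝ) => Sum.elim q.1 q.2) := by
    refine measurable_pi_lambda _ (fun i => ?_)
    cases i with
    | inl j => exact (measurable_pi_apply j).comp measurable_fst
    | inr j => exact (measurable_pi_apply j).comp measurable_snd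
  have mF : Measurable fun x => ENNReal.ofReal (gaussianPdf (0 : Fin p → ℝ) S x) :=
    (measurable_gaussianPdf _ _).ennreal_ofReal
  have mG2 : Measurable fun q : (Fin p → ℝ) × (Fin p → ℝ) =>
      ENNReal.ofReal (gaussianPdf (A *ᵥ q.1) V q.2) :=
    (measurable_gaussianPdf2 A V).ennreal_ofReal
  have mH : Measurable fun z => ENNReal.ofReal (gaussianPdf (0 : (Fin p ⊕ Fin p) → ℝ) G z) :=
    (measurable_gaussianPdf _ _).ennreal_ofReal
  -- map formula
  have hmapE : ∀ (E : Set ((Fin p ⊕ Fin p) → ℝ)), MeasurableSet E → ∀ x : Fin p → ℝ,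
      Measure.map (fun xt => Sum.elim x xt) (gaussianMeasure (A *ᵥ x) V) E
      = ∫⁻ xt, E.indicator (fun _ => (1:ENNReal)) (Sum.elim x xt)
          * ENNReal.ofReal (gaussianPdf (A *ᵥ x) V xt) := by
    intro E hE x
    rw [Measure.map_apply (mElim x) hE, gaussianMeasure,
      withDensity_apply _ ((mElim x) hE), ← lintegral_indicator ((mElim x) hE)]
    congr 1
    funext xt
    by_cases h : Sum.elim x xt ∈ E <;>
      simp [Set.indicator, Set.mem_preimage, h]
  have hκ : Measurable fun x : Fin p → ℝ =>
      Measure.map (fun xt => Sum.elim x xt) (gaussianMeasure (A *ᵥ x) V) := by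
    refine Measure.measurable_of_measurable_coe _ (fun E hE => ?_)
    simp only [hmapE E hE]
    exact Measurable.lintegral_prod_right'
      (f := fun q : (Fin p → ℝ) × (Fin p → ℝ) =>
        E.indicator (fun _ => (1:ENNReal)) (Sum.elim q.1 q.2)
          * ENNReal.ofReal (gaussianPdf (A *ᵥ q.1) V q.2))
      (((measurable_const.indicator hE).comp mElim2).mul mG2)
  ext E hE
  rw [Measure.bind_apply hE hκ.aemeasurable]
  -- left-hand side
  have step1 : ∫⁻ x, Measure.map (fun xt => Sum.elim x xt) (gaussianMeasure (A *ᵥ x) V) E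
        ∂(gaussianMeasure (0 : Fin p → ℝ) S)
      = ∫⁻ x, ∫⁻ xt, ENNReal.ofReal (gaussianPdf (0 : Fin p → ℝ) S x) *
          (E.indicator (fun _ => (1:ENNReal)) (Sum.elim x xt)
            * ENNReal.ofReal (gaussianPdf (A *ᵥ x) V xt)) := by
    have hg : Measurable fun x : Fin p → ℝ =>
        Measure.map (fun xt => Sum.elim x xt) (gaussianMeasure (A *ᵥ x) V) E :=
      (Measure.measurable_coe hE).comp hκ
    rw [gaussianMeasure, lintegral_withDensity_eq_lintegral_mul volume mF hg]
    refine lintegral_congr (fun x => ?_)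
    simp only [Pi.mul_apply]
    rw [hmapE E hE x, ← lintegral_const_mul _ ?_]
    exact (((measurable_const.indicator hE).comp mElim2).mul mG2).comp
      (measurable_prodMk_left (x := x))
  rw [step1]
  -- right-hand side
  have hΨ : Measurable fun z : (Fin p ⊕ Fin p) → ℝ =>
      E.indicator (fun _ => (1:ENNReal)) z
        * ENNReal.ofReal (gaussianPdf (0 : (Fin p ⊕ Fin p) → ℝ) G z) :=
    (measurable_const.indicator hE).mul mH
  have step2 : gaussianMeasure (0 : (Fin p ⊕ Fin p) → ℝ) G E
      = ∫⁻ z, E.indicator (fun _ => (1:ENNReal)) z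
          * ENNReal.ofReal (gaussianPdf (0 : (Fin p ⊕ Fin p) → ℝ) G z) := by
    rw [gaussianMeasure, withDensity_apply _ hE, ← lintegral_indicator hE]
    refine lintegral_congr (fun z => ?_)
    by_cases h : z ∈ E <;> simp [Set.indicator, h]
  rw [step2]
  have mp := MeasureTheory.volume_measurePreserving_sumPiEquivProdPi_symm
    (fun _ : Fin p ⊕ Fin p => ℝ)
  rw [← mp.lintegral_comp hΨ]
  have hesymm : ∀ (x xt : Fin p → ℝ),
      (MeasurableEquiv.sumPiEquivProdPi (fun _ : Fin p ⊕ Fin p => ℝ)).symm (x, xt)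
        = Sum.elim x xt := by
    intro x xt
    funext i
    cases i <;> rfl
  have hcomp : Measurable fun w : (Fin p → ℝ) × (Fin p → ℝ) =>
      E.indicator (fun _ => (1:ENNReal))
          ((MeasurableEquiv.sumPiEquivProdPi (fun _ : Fin p ⊕ Fin p => ℝ)).symm w)
        * ENNReal.ofReal (gaussianPdf (0 : (Fin p ⊕ Fin p) → ℝ) G
          ((MeasurableEquiv.sumPiEquivProdPi (fun _ : Fin p ⊕ Fin p => ℝ)).symm w)) :=
    hΨ.comp (MeasurableEquiv.sumPiEquivProdPi (fun _ : Fin p ⊕ Fin p => ℝ)).symm.measurable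
  rw [Measure.volume_eq_prod, lintegral_prod _ hcomp.aemeasurable]
  refine lintegral_congr (fun x => lintegral_congr (fun xt => ?_))
  rw [hesymm x xt, hfact_pdf x xt,
    ENNReal.ofReal_mul (gaussianPdf_nonneg _ _ _)]
  ring
end
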